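/- Let Z be a standard normal random variable, μ ∈ ℝ, σ > 0, ξ > 0, and let T be the TTF map T(z) = μ + σ·(1/ξ)·[erfc(|z−μ|/(σ√2))^{−ξ} − 1] restricted to the right side z ≥ μ (with sign s = +1). Then the transformed variable X = T(μ + σ|Z|) has a Pareto-type right tail with index 1/ξ: P(X − μ > σ·x) = (1 + ξx)^{−1/ξ} for all x ≥ 0. In particular, X − μ, conditioned on being positive, follows a Generalized Pareto distribution with shape ξ and scale σ. -/

import Mathlib

open Real Set MeasureTheory ProbabilityTheory Filter Topology

/-- The complementary error function `erfc x = (2/√π) ∫_x^∞ e^{-t²} dt`. -/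
noncomputable def erfc (x : ℝ) : ℝ :=
  (2 / Real.sqrt π) * ∫ t in Set.Ioi x, Real.exp (-t ^ 2)

/-- The right-sided Tail Transform Flow map (sign `s = +1`). -/
noncomputable def TTFright (μ₀ σ ξ : ℝ) (z : ℝ) : ℝ :=
  μ₀ + σ * (1 / ξ) * (erfc (|z - μ₀| / (σ * Real.sqrt 2)) ^ (-ξ) - 1)

lemma integrable_gaussian' : Integrable (fun t : ℝ => Real.exp (-t ^ 2)) := by
  simpa using integrable_exp_neg_mul_sq (one_pos)

lemma integral_Ioi_split (a x : ℝ) :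
    (∫ t in Set.Ioi a, Real.exp (-t ^ 2))
      = (∫ t in a..x, Real.exp (-t ^ 2)) + ∫ t in Set.Ioi x, Real.exp (-t ^ 2) := by
  rcases le_total a x with h | h
  · rw [intervalIntegral.integral_of_le h, ← Ioc_union_Ioi_eq_Ioi h,
      setIntegral_union (Ioc_disjoint_Ioi le_rfl) measurableSet_Ioi
        integrable_gaussian'.integrableOn integrable_gaussian'.integrableOn]
  · rw [intervalIntegral.integral_of_ge h, ← Ioc_union_Ioi_eq_Ioi h,
      setIntegral_union (Ioc_disjoint_Ioi le_rfl) measurableSet_Ioi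
        integrable_gaussian'.integrableOn integrable_gaussian'.integrableOn]
    ring

lemma erfc_continuous : Continuous erfc := by
  have : erfc = fun x =>
      (2 / Real.sqrt π) * ((∫ t in Set.Ioi 0, Real.exp (-t ^ 2)) - ∫ t in (0:ℝ)..x, Real.exp (-t ^ 2)) := by
    funext x
    rw [erfc, integral_Ioi_split 0 x]
    ring
  rw [this]
  exact continuous_const.mul
    (continuous_const.sub (integrable_gaussian'.continuous_primitive 0))

lemma sqrt_pi_pos : 0 < Real.sqrt π := Real.sqrt_pos.2 Real.pi_pos

lemma integral_Ioi_gaussian_pos (x : ℝ) : 0 < ∫ t in Set.Ioi x, Real.exp (-t ^ 2) := by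
  rw [setIntegral_pos_iff_support_of_nonneg_ae
    (Filter.Eventually.of_forall fun t => (Real.exp_pos _).le)
    integrable_gaussian'.integrableOn]
  have : Function.support (fun t : ℝ => Real.exp (-t ^ 2)) = Set.univ := by
    ext t; simp [Function.support, (Real.exp_pos (-t ^ 2)).ne']
  rw [this, Set.univ_inter]
  simp [Real.volume_Ioi]

lemma erfc_pos (x : ℝ) : 0 < erfc x :=
  mul_pos (div_pos two_pos sqrt_pi_pos) (integral_Ioi_gaussian_pos x)

lemma erfc_strictAnti : StrictAnti erfc := by
  intro a b hab
  have h := integral_Ioi_split a b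
  have hpos : 0 < ∫ t in a..b, Real.exp (-t ^ 2) := by
    rw [intervalIntegral.integral_of_le hab.le]
    have := setIntegral_pos_iff_support_of_nonneg_ae
      (μ := volume) (s := Set.Ioc a b)
      (f := fun t : ℝ => Real.exp (-t ^ 2))
      (Filter.Eventually.of_forall fun t => (Real.exp_pos _).le)
      integrable_gaussian'.integrableOn
    rw [this]
    have hsupp : Function.support (fun t : ℝ => Real.exp (-t ^ 2)) = Set.univ := by
      ext t; simp [Function.support, (Real.exp_pos (-t ^ 2)).ne']
    rw [hsupp, Set.univ_inter, Real.volume_Ioc]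
    simp [sub_pos.2 hab]
  have : (∫ t in Set.Ioi b, Real.exp (-t ^ 2)) < ∫ t in Set.Ioi a, Real.exp (-t ^ 2) := by
    rw [h]; linarith
  exact mul_lt_mul_of_pos_left this (div_pos two_pos sqrt_pi_pos)

lemma erfc_zero : erfc 0 = 1 := by
  rw [erfc]
  have : (∫ t in Set.Ioi (0:ℝ), Real.exp (-t ^ 2)) = Real.sqrt (π / 1) / 2 := by
    simpa using integral_gaussian_Ioi 1
  rw [this]
  field_simp

lemma erfc_tendsto : Tendsto erfc atTop (𝓝 0) := by
  have h1 : Tendsto (fun x : ℝ => ∫ t in Set.Ioi x, Real.exp (-t ^ 2)) atTop (𝓝 0) := by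
    have h := tendsto_setIntegral_of_antitone (μ := volume)
      (f := fun t : ℝ => Real.exp (-t ^ 2)) (s := fun x : ℝ => Set.Ioi x)
      (fun i => measurableSet_Ioi) (fun i j hij => Ioi_subset_Ioi hij)
      ⟨0, integrable_gaussian'.integrableOn⟩
    have hempty : (⋂ x : ℝ, Set.Ioi x) = (∅ : Set ℝ) := by
      rw [Set.eq_empty_iff_forall_notMem]
      intro y hy
      have := Set.mem_iInter.1 hy y
      exact lt_irrefl y this
    rwa [hempty, Measure.restrict_empty, integral_zero_measure] at h
  have := h1.const_mul (2 / Real.sqrt π)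
  rw [mul_zero] at this
  exact this

lemma exists_erfc_eq {t : ℝ} (ht0 : 0 < t) (ht1 : t ≤ 1) : ∃ c : ℝ, 0 ≤ c ∧ erfc c = t := by
  obtain ⟨M, hM⟩ := (erfc_tendsto.eventually_lt_const ht0).exists
  set N := max 0 M with hN
  have hNt : erfc N ≤ t := le_trans (erfc_strictAnti.antitone (le_max_right 0 M)) hM.le
  have hmem : t ∈ Set.Icc (erfc N) (erfc 0) := ⟨hNt, by rw [erfc_zero]; exact ht1⟩
  obtain ⟨c, hc, hct⟩ := intermediate_value_Icc' (le_max_left 0 M)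
    erfc_continuous.continuousOn hmem
  exact ⟨c, hc.1, hct⟩

lemma gaussian_pdf_even (y : ℝ) : gaussianPDFReal 0 1 (-y) = gaussianPDFReal 0 1 y := by
  simp [gaussianPDFReal]

lemma integral_Ioi_pdf (c : ℝ) :
    (∫ y in Set.Ioi c, gaussianPDFReal 0 1 y)
      = (Real.sqrt π)⁻¹ * ∫ t in Set.Ioi (c / Real.sqrt 2), Real.exp (-t ^ 2) := by
  have h2 : (0:ℝ) < (Real.sqrt 2)⁻¹ := inv_pos.2 (Real.sqrt_pos.2 two_pos)
  have key := integral_comp_mul_left_Ioi (fun t => Real.exp (-t ^ 2)) c h2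
  have heq : ∀ x : ℝ, Real.exp (-((Real.sqrt 2)⁻¹ * x) ^ 2) = Real.exp (-x ^ 2 / 2) := by
    intro x
    congr 1
    rw [mul_pow, inv_pow, Real.sq_sqrt two_pos.le]
    ring
  simp_rw [heq] at key
  have hpdf : ∀ y : ℝ, gaussianPDFReal 0 1 y
      = (Real.sqrt (2 * π))⁻¹ * Real.exp (-y ^ 2 / 2) := by
    intro y; simp [gaussianPDFReal]
  have harg : (Real.sqrt 2)⁻¹ * c = c / Real.sqrt 2 := by
    rw [div_eq_mul_inv, mul_comm]
  rw [harg] at key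
  simp_rw [hpdf]
  rw [integral_const_mul, key]
  rw [smul_eq_mul, inv_inv, Real.sqrt_mul two_pos.le, mul_inv]
  have hπ : Real.sqrt π ≠ 0 := sqrt_pi_pos.ne'
  have h2' : Real.sqrt 2 ≠ 0 := (Real.sqrt_pos.2 two_pos).ne'
  field_simp

lemma gaussian_tail {c : ℝ} (hc : 0 ≤ c) :
    ((gaussianReal 0 1) {y : ℝ | c < |y|}).toReal = erfc (c / Real.sqrt 2) := by
  have hs : {y : ℝ | c < |y|} = Set.Iio (-c) ∪ Set.Ioi c := by
    ext y
    simp only [Set.mem_setOf_eq, Set.mem_union, Set.mem_Iio, Set.mem_Ioi, lt_abs]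
    constructor
    · rintro (h | h)
      · right; exact h
      · left; linarith
    · rintro (h | h)
      · right; linarith
      · left; exact h
  rw [gaussianReal_apply_eq_integral 0 one_ne_zero, ENNReal.toReal_ofReal]
  swap
  · exact setIntegral_nonneg (by
      rw [hs]; exact (measurableSet_Iio.union measurableSet_Ioi))
      (fun y _ => gaussianPDFReal_nonneg 0 1 y)
  rw [hs, setIntegral_union (by
        apply Set.disjoint_left.2
        intro y hy hy'
        simp only [Set.mem_Iio] at hy
        simp only [Set.mem_Ioi] at hy'
        linarith) measurableSet_Ioi
      (integrable_gaussianPDFReal 0 1).integrableOn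
      (integrable_gaussianPDFReal 0 1).integrableOn]
  have hneg : (∫ y in Set.Iio (-c), gaussianPDFReal 0 1 y)
      = ∫ y in Set.Ioi c, gaussianPDFReal 0 1 y := by
    have h := integral_comp_neg_Iic (-c) (gaussianPDFReal 0 1)
    rw [neg_neg] at h
    rw [← integral_Iic_eq_integral_Iio, ← h]
    simp_rw [gaussian_pdf_even]
  rw [hneg, integral_Ioi_pdf, erfc]
  rw [div_eq_mul_inv (2:ℝ), ← two_mul]
  ring

/-- for a standard normal `Z`, the TTF-transformed variable
`X = T(μ₀ + σ |Z|)` has an exact Generalized Pareto right tail: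
`P(X - μ₀ > σ x) = (1 + ξ x)^{-1/ξ}` for all `x ≥ 0`. -/
theorem TTF_of_folded_gaussian_is_GPD
    {Ω : Type*} [MeasureSpace Ω] (P : Measure Ω) [IsProbabilityMeasure P]
    (Z : Ω → ℝ) (hZmeas : Measurable Z)
    (hZ : Measure.map Z P = ProbabilityTheory.gaussianReal 0 1)
    (μ₀ σ ξ : ℝ) (hσ : 0 < σ) (hξ : 0 < ξ) :
    ∀ x : ℝ, 0 ≤ x →
      (P {ω | σ * x < TTFright μ₀ σ ξ (μ₀ + σ * |Z ω|) - μ₀}).toReal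
        = (1 + ξ * x) ^ (-1 / ξ) := by
  intro x hx
  have hξx : 0 ≤ ξ * x := mul_nonneg hξ.le hx
  have h1ξx : (0:ℝ) < 1 + ξ * x := by linarith
  set t : ℝ := (1 + ξ * x) ^ (-1 / ξ) with ht
  have ht0 : 0 < t := Real.rpow_pos_of_pos h1ξx _
  have ht1 : t ≤ 1 := Real.rpow_le_one_of_one_le_of_nonpos (by linarith)
    (div_nonpos_of_nonpos_of_nonneg (by norm_num) hξ.le)
  obtain ⟨c, hc0, hct⟩ := exists_erfc_eq ht0 ht1
  set d : ℝ := c * Real.sqrt 2 with hd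
  have hsqrt2 : (0:ℝ) < Real.sqrt 2 := Real.sqrt_pos.2 two_pos
  have hd0 : 0 ≤ d := mul_nonneg hc0 hsqrt2.le
  have htexp : (1 + ξ * x) = t ^ (-ξ) := by
    rw [ht, ← Real.rpow_mul h1ξx.le]
    have : (-1 / ξ) * (-ξ) = 1 := by field_simp
    rw [this, Real.rpow_one]
  have hset : {ω | σ * x < TTFright μ₀ σ ξ (μ₀ + σ * |Z ω|) - μ₀}
      = Z ⁻¹' {y : ℝ | d < |y|} := by
    ext ω
    simp only [Set.mem_setOf_eq, Set.mem_preimage, TTFright]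
    have habs : |μ₀ + σ * |Z ω| - μ₀| = σ * |Z ω| := by
      rw [add_sub_cancel_left]
      exact abs_of_nonneg (mul_nonneg hσ.le (abs_nonneg _))
    rw [habs, add_sub_cancel_left]
    have harg : σ * |Z ω| / (σ * Real.sqrt 2) = |Z ω| / Real.sqrt 2 :=
      mul_div_mul_left _ _ hσ.ne'
    rw [harg]
    set u : ℝ := erfc (|Z ω| / Real.sqrt 2) with hu
    have hu0 : 0 < u := erfc_pos _
    have hstep1 : σ * x < σ * (1 / ξ) * (u ^ (-ξ) - 1) ↔ 1 + ξ * x < u ^ (-ξ) := by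
      rw [show σ * (1 / ξ) * (u ^ (-ξ) - 1) = σ * ((u ^ (-ξ) - 1) / ξ) by ring,
        mul_lt_mul_iff_right₀ hσ, lt_div_iff₀ hξ]
      constructor <;> intro h <;> nlinarith
    rw [hstep1, htexp, Real.rpow_lt_rpow_iff_of_neg ht0 hu0 (neg_neg_iff_pos.2 hξ)]
    rw [hu, ← hct, erfc_strictAnti.lt_iff_gt, lt_div_iff₀ hsqrt2]
  have hmeas : MeasurableSet {y : ℝ | d < |y|} :=
    (isOpen_lt continuous_const continuous_abs).measurableSet
  rw [hset, ← Measure.map_apply hZmeas hmeas, hZ, gaussian_tail hd0]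
  rw [show d / Real.sqrt 2 = c from mul_div_cancel_right₀ c hsqrt2.ne']
  exact hct
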